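/- Let X be a countable type, let π and ρ be strictly positive probability mass functions on X, and let I : X → ℕ be a function assigning to each state its energy-set index, with p_j = Σ_{x : I(x) = j} ρ(x) > 0 for every j in the range of I. Define the equi-energy jump transition matrix K by: for y ≠ x, K(x, y) = (ρ(y)/p_{I(x)}) · min(1, π(y)ρ(x)/(π(x)ρ(y))) if I(y) = I(x) and K(x, y) = 0 otherwise; and K(x, x) = 1 − Σ_{y ≠ x} K(x, y). Then K is a Markov transition matrix that is reversible with respect to π (π(x)K(x,y) = π(y)K(y,x) for all x, y), and consequently π is a stationary distribution of K: Σ_x π(x) K(x, y) = π(y) for every y. -/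
import Mathlib


open scoped Classical

noncomputable def eeJumpKernel {X : Type*} (pd rd : X → ℝ) (I : X → ℕ) (p : ℕ → ℝ) :
    X → X → ℝ := fun x y =>
  if y = x then
    1 - ∑' z : X,
      (if I z = I x ∧ z ≠ x then rd z / p (I x) * min 1 (pd z * rd x / (pd x * rd z)) else 0)
  else
    if I y = I x then rd y / p (I x) * min 1 (pd y * rd x / (pd x * rd y)) else 0

/-- Off-diagonal part of the equi-energy jump kernel. -/
noncomputable def eeOff {X : Type*} (pd rd : X → ℝ) (I : X → ℕ) (p : ℕ → ℝ) (x z : X) : ℝ :=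
  if I z = I x ∧ z ≠ x then rd z / p (I x) * min 1 (pd z * rd x / (pd x * rd z)) else 0

lemma ee_key (a b : ℝ) (ha : 0 < a) : a * min 1 (b / a) = min a b := by
  rw [mul_min_of_nonneg _ _ ha.le, mul_one, mul_div_cancel₀ _ ha.ne']

/-- On a countable state space, the equi-energy jump kernel `K` is a Markov
transition matrix, it is reversible with respect to the target pmf `pd`
(`pd(x)K(x,y) = pd(y)K(y,x)`), and consequently `pd` is a stationary
distribution of `K`. -/
theorem eeJumpKernel_markov_reversible_stationary
    {X : Type*} [Countable X] (pd rd : X → ℝ) (I : X → ℕ)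
    (hpd : ∀ x, 0 < pd x) (hrd : ∀ x, 0 < rd x)
    (hpd1 : ∑' x, pd x = 1) (hrd1 : ∑' x, rd x = 1)
    (p : ℕ → ℝ) (hp : ∀ j, p j = ∑' x : X, (if I x = j then rd x else 0))
    (hppos : ∀ j, (∃ x, I x = j) → 0 < p j) :
    (∀ x y, 0 ≤ eeJumpKernel pd rd I p x y) ∧
    (∀ x, ∑' y, eeJumpKernel pd rd I p x y = 1) ∧
    (∀ x y, pd x * eeJumpKernel pd rd I p x y = pd y * eeJumpKernel pd rd I p y x) ∧
    (∀ y, ∑' x, pd x * eeJumpKernel pd rd I p x y = pd y) := by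
  have hrdsum : Summable rd := by
    by_contra h
    rw [tsum_eq_zero_of_not_summable h] at hrd1
    norm_num at hrd1
  have hppos' : ∀ x, 0 < p (I x) := fun x => hppos _ ⟨x, rfl⟩
  have hfnn : ∀ x z, 0 ≤ eeOff pd rd I p x z := by
    intro x z
    unfold eeOff
    split_ifs with h
    · have h2 : 0 ≤ min 1 (pd z * rd x / (pd x * rd z)) :=
        le_min zero_le_one
          (div_nonneg (mul_nonneg (hpd z).le (hrd x).le) (mul_nonneg (hpd x).le (hrd z).le))
      have h1 : 0 ≤ rd z / p (I x) := (div_pos (hrd z) (hppos' x)).le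
      exact mul_nonneg h1 h2
    · exact le_refl 0
  -- indicator summable
  have hindsum : ∀ j, Summable (fun z => if I z = j then rd z else 0) := by
    intro j
    refine hrdsum.of_nonneg_of_le (fun z => ?_) (fun z => ?_)
    · split_ifs; exacts [(hrd z).le, le_refl 0]
    · split_ifs; exacts [le_refl _, (hrd z).le]
  have hfb : ∀ x z, eeOff pd rd I p x z ≤ (if I z = I x then rd z else 0) * (p (I x))⁻¹ := by
    intro x z
    unfold eeOff
    by_cases h : I z = I x ∧ z ≠ x
    · rw [if_pos h, if_pos h.1]
      have h1 : 0 ≤ rd z / p (I x) := (div_pos (hrd z) (hppos' x)).le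
      calc rd z / p (I x) * min 1 (pd z * rd x / (pd x * rd z))
          ≤ rd z / p (I x) * 1 := by
            exact mul_le_mul_of_nonneg_left (min_le_left _ _) h1
        _ = rd z * (p (I x))⁻¹ := by rw [mul_one, div_eq_mul_inv]
    · rw [if_neg h]
      split_ifs
      · exact mul_nonneg (hrd z).le (inv_nonneg.mpr (hppos' x).le)
      · rw [zero_mul]
  have hfs : ∀ x, Summable (eeOff pd rd I p x) := fun x =>
    Summable.of_nonneg_of_le (hfnn x) (hfb x) ((hindsum (I x)).mul_right _)
  have hS_le : ∀ x, ∑' z, eeOff pd rd I p x z ≤ 1 := by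
    intro x
    calc ∑' z, eeOff pd rd I p x z
        ≤ ∑' z, (if I z = I x then rd z else 0) * (p (I x))⁻¹ :=
          Summable.tsum_le_tsum (hfb x) (hfs x) ((hindsum (I x)).mul_right _)
      _ = p (I x) * (p (I x))⁻¹ := by rw [tsum_mul_right, ← hp]
      _ = 1 := mul_inv_cancel₀ (hppos' x).ne'
  have hKdiag : ∀ x, eeJumpKernel pd rd I p x x = 1 - ∑' z, eeOff pd rd I p x z := by
    intro x; simp [eeJumpKernel, eeOff]
  have hKoff : ∀ x y, y ≠ x → eeJumpKernel pd rd I p x y = eeOff pd rd I p x y := by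
    intro x y hxy
    simp only [eeJumpKernel, eeOff, if_neg hxy]
    by_cases hI : I y = I x
    · rw [if_pos hI, if_pos ⟨hI, hxy⟩]
    · rw [if_neg hI, if_neg (fun h => hI h.1)]
  have hKnn : ∀ x y, 0 ≤ eeJumpKernel pd rd I p x y := by
    intro x y
    by_cases hxy : y = x
    · subst hxy; rw [hKdiag]; linarith [hS_le y]
    · rw [hKoff x y hxy]; exact hfnn x y
  have hKrowsummable : ∀ x, Summable (eeJumpKernel pd rd I p x) := by
    intro x
    have heq : eeJumpKernel pd rd I p x = fun y =>
        eeOff pd rd I p x y +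
          (if y = x then eeJumpKernel pd rd I p x x - eeOff pd rd I p x x else 0) := by
      funext y
      by_cases hxy : y = x
      · subst hxy; simp
      · rw [if_neg hxy, add_zero, hKoff x y hxy]
    rw [heq]
    refine (hfs x).add (summable_of_ne_finset_zero (s := {x}) ?_)
    intro y hy
    rw [if_neg (by simpa using hy)]
  have hKrow : ∀ x, ∑' y, eeJumpKernel pd rd I p x y = 1 := by
    intro x
    rw [Summable.tsum_eq_add_tsum_ite (hKrowsummable x) x]
    have : ∑' y, (if y = x then 0 else eeJumpKernel pd rd I p x y)
        = ∑' y, eeOff pd rd I p x y := by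
      refine tsum_congr fun y => ?_
      by_cases hxy : y = x
      · subst hxy
        rw [if_pos rfl]
        simp [eeOff]
      · rw [if_neg hxy, hKoff x y hxy]
    rw [this, hKdiag x]
    ring
  have hrev : ∀ x y, pd x * eeJumpKernel pd rd I p x y
      = pd y * eeJumpKernel pd rd I p y x := by
    intro x y
    by_cases hxy : y = x
    · subst hxy; rfl
    · rw [hKoff x y hxy, hKoff y x (fun h => hxy h.symm)]
      unfold eeOff
      by_cases hI : I y = I x
      · rw [if_pos ⟨hI, hxy⟩, if_pos ⟨hI.symm, fun h => hxy h.symm⟩, hI]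
        have h1 : pd x * (rd y / p (I x) * min 1 (pd y * rd x / (pd x * rd y)))
            = (pd x * rd y) * min 1 ((pd y * rd x) / (pd x * rd y)) / p (I x) := by ring
        have h2 : pd y * (rd x / p (I x) * min 1 (pd x * rd y / (pd y * rd x)))
            = (pd y * rd x) * min 1 ((pd x * rd y) / (pd y * rd x)) / p (I x) := by ring
        rw [h1, h2, ee_key _ _ (mul_pos (hpd x) (hrd y)), ee_key _ _ (mul_pos (hpd y) (hrd x)), min_comm]
      · rw [if_neg (fun h => hI h.1), if_neg (fun h => hI h.1.symm), mul_zero, mul_zero]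
  refine ⟨hKnn, hKrow, hrev, fun y => ?_⟩
  calc ∑' x, pd x * eeJumpKernel pd rd I p x y
      = ∑' x, pd y * eeJumpKernel pd rd I p y x := tsum_congr fun x => hrev x y
    _ = pd y * ∑' x, eeJumpKernel pd rd I p y x := tsum_mul_left
    _ = pd y := by rw [hKrow y, mul_one]
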